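/- Any ℤ-graded linear map f : M(s,ε) → M(-s,ε) commuting with the actions of E and F (equivalently, f(v_n) = f_n v'_n with (s+n+1)f_{n+2} = (-s+n+1)f_n) is uniquely determined by a single value f_{ε}; hence the space of intertwining operators M(s,ε) → M(-s,ε) is at most one-dimensional. -/

import Mathlib

/- An intertwiner f : M(s,ε) → M(-s,ε) is given by its diagonal coefficients
   f_n, n ∈ ε + 2ℤ, reindexed here as f : ℤ → ℂ with `f k` the coefficient
   f_{ε+2k} (so f 0 = f_ε), subject to (s+n+1) f_{n+2} = (-s+n+1) f_n. -/

def Intertwiner (s : ℂ) (ε : ℤ) (f : ℤ → ℂ) : Prop :=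
  ∀ k : ℤ, (s + ((ε : ℂ) + 2 * (k : ℂ)) + 1) * f (k + 1)
    = (-s + ((ε : ℂ) + 2 * (k : ℂ)) + 1) * f k

lemma coefA_ne (s : ℂ) (ε : ℤ)
    (hs : ∀ k : ℤ, s - (ε : ℂ) ≠ 2 * (k : ℂ) + 1) (k : ℤ) :
    s + ((ε : ℂ) + 2 * (k : ℂ)) + 1 ≠ 0 := by
  intro h
  apply hs (-ε - k - 1)
  push_cast
  linear_combination h

lemma coefB_ne (s : ℂ) (ε : ℤ)
    (hs : ∀ k : ℤ, s - (ε : ℂ) ≠ 2 * (k : ℂ) + 1) (k : ℤ) :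
    -s + ((ε : ℂ) + 2 * (k : ℂ)) + 1 ≠ 0 := by
  intro h
  apply hs k
  linear_combination -h

lemma intertwiner_unique (s : ℂ) (ε : ℤ)
    (hs : ∀ k : ℤ, s - (ε : ℂ) ≠ 2 * (k : ℂ) + 1)
    (f g : ℤ → ℂ) (hf : Intertwiner s ε f) (hg : Intertwiner s ε g)
    (h0 : f 0 = g 0) : ∀ k : ℤ, f k = g k := by
  intro k
  induction k using Int.induction_on with
  | zero => exact h0
  | succ i ih =>
    apply mul_left_cancel₀ (coefA_ne s ε hs i)
    rw [hf i, hg i, ih]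
  | pred i ih =>
    apply mul_left_cancel₀ (coefB_ne s ε hs (-(i : ℤ) - 1))
    have hfi := hf (-(i : ℤ) - 1)
    have hgi := hg (-(i : ℤ) - 1)
    simp only [sub_add_cancel] at hfi hgi
    rw [← hfi, ← hgi, ih]

/-- A graded intertwiner M(s,ε) → M(-s,ε) is uniquely determined by the single
    value f_ε; hence the space of intertwining operators is at most
    one-dimensional. -/
theorem stmt19 (s : ℂ) (ε : ℤ) (hε : ε = 0 ∨ ε = 1)
    (hs : ∀ k : ℤ, s - (ε : ℂ) ≠ 2 * (k : ℂ) + 1) :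
    (∀ f g : ℤ → ℂ, Intertwiner s ε f → Intertwiner s ε g →
      f 0 = g 0 → ∀ k : ℤ, f k = g k) ∧
    (∀ f g : ℤ → ℂ, Intertwiner s ε f → Intertwiner s ε g →
      ∃ c d : ℂ, ¬(c = 0 ∧ d = 0) ∧ ∀ k : ℤ, c * f k + d * g k = 0) := by
  constructor
  · exact intertwiner_unique s ε hs
  · intro f g hf hg
    have hzero : Intertwiner s ε (fun _ => 0) := by intro k; simp
    rcases eq_or_ne (g 0) 0 with h | h
    · refine ⟨0, 1, by simp, ?_⟩
      intro k
      have := intertwiner_unique s ε hs g (fun _ => 0) hg hzero (by simpa using h) k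
      simpa using this
    refine ⟨g 0, -f 0, ?_, ?_⟩
    · intro ⟨hc, _⟩; exact h hc
    · have hcomb : Intertwiner s ε (fun k => g 0 * f k + (-f 0) * g k) := by
        intro k
        simp only
        linear_combination g 0 * hf k - f 0 * hg k
      have := intertwiner_unique s ε hs _ (fun _ => 0) hcomb hzero
        (by change g 0 * f 0 + -f 0 * g 0 = (0:ℂ); ring)
      intro k
      simpa using this k
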